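/- Let X be a Noetherian scheme and D ⊆ X an effective Cartier divisor. The pair (D, X) is normal (every finite modification of X centered at D is an isomorphism) if and only if X is regular at all generic points of D and D has no embedded points. -/

import Mathlib

/-- The pair (V(I), Spec R) is normal: every finite modification centered at V(I)
(finite ring map with kernel and cokernel killed by a power of I, no associated prime
of the target containing the extended ideal) is an isomorphism. -/
def IsNormalPair (R : Type) [CommRing R] (I : Ideal R) : Prop :=
  ∀ (S : Type) (_ : CommRing S) (φ : R →+* S),
    (letI := φ.toAlgebra; Module.Finite R S) →
    (∃ n : ℕ,
      (∀ x ∈ RingHom.ker φ, ∀ y ∈ I ^ n, y * x = 0) ∧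
      (∀ s : S, ∀ y ∈ I ^ n, φ y * s ∈ φ.range)) →
    (∀ q ∈ associatedPrimes S S, ¬ Ideal.map φ I ≤ q) →
    Function.Bijective φ

section Helpers

open Ideal


/-- A nonzerodivisor maps to a nonzerodivisor in any localization. -/
lemma nzd_localization {R : Type*} [CommRing R] (M : Submonoid R) (S : Type*) [CommRing S]
    [Algebra R S] [IsLocalization M S] {g : R} (hg : g ∈ nonZeroDivisors R) :
    algebraMap R S g ∈ nonZeroDivisors S := by
  rw [mem_nonZeroDivisors_iff_right]
  intro z hz
  obtain ⟨⟨z', s⟩, hzs⟩ := IsLocalization.surj M z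
  simp only at hzs
  have h1 : algebraMap R S (g * z') = 0 := by
    rw [_root_.map_mul, ← hzs]
    linear_combination (algebraMap R S (s : R)) * hz
  obtain ⟨m, hm⟩ := (IsLocalization.map_eq_zero_iff M S _).mp h1
  have hz' : (m : R) * z' = 0 := mem_nonZeroDivisors_iff_right.mp hg _ (by linear_combination hm)
  have h2 : algebraMap R S z' = 0 :=
    (IsLocalization.map_eq_zero_iff M S _).mpr ⟨m, hz'⟩
  have h3 : z * algebraMap R S s = 0 := by rw [hzs, h2]
  exact ((IsLocalization.map_units S s).mul_left_eq_zero).mp h3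

/-- In a Noetherian local ring whose maximal ideal is generated by `t`, every nonzero
element is `t ^ i * u` for a unit `u`. -/
lemma rep_local {A : Type*} [CommRing A] [IsLocalRing A] [IsNoetherianRing A] {t : A}
    (hm : IsLocalRing.maximalIdeal A = Ideal.span {t}) {x : A} (hx : x ≠ 0) :
    ∃ (i : ℕ) (u : A), IsUnit u ∧ x = t ^ i * u := by
  classical
  have hbot : (⨅ i : ℕ, (IsLocalRing.maximalIdeal A) ^ i) = ⊥ :=
    Ideal.iInf_pow_eq_bot_of_isLocalRing _ (IsLocalRing.maximalIdeal.isMaximal A).ne_top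
  have hex : ∃ j : ℕ, x ∉ (IsLocalRing.maximalIdeal A) ^ j := by
    by_contra h
    push_neg at h
    have : x ∈ (⊥ : Ideal A) := by rw [← hbot]; exact Submodule.mem_iInf _ |>.mpr h
    exact hx (by simpa using this)
  have key : ∃ j : ℕ, x ∈ (IsLocalRing.maximalIdeal A) ^ j ∧
      x ∉ (IsLocalRing.maximalIdeal A) ^ (j + 1) := by
    have hj0 : Nat.find hex ≠ 0 := by
      intro h
      have := Nat.find_spec hex
      rw [h, pow_zero, Ideal.one_eq_top] at this
      exact this trivial
    refine ⟨Nat.find hex - 1, ?_, ?_⟩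
    · exact not_not.mp (Nat.find_min hex (by omega))
    · have h1 : Nat.find hex - 1 + 1 = Nat.find hex := by omega
      rw [h1]
      exact Nat.find_spec hex
  obtain ⟨j, hj1, hj2⟩ := key
  rw [hm, Ideal.span_singleton_pow, Ideal.mem_span_singleton] at hj1
  obtain ⟨u, hu⟩ := hj1
  refine ⟨j, u, ?_, hu⟩
  by_contra hunit
  have humem : u ∈ IsLocalRing.maximalIdeal A := hunit
  rw [hm, Ideal.mem_span_singleton] at humem
  obtain ⟨v, hv⟩ := humem
  apply hj2
  rw [hm, Ideal.span_singleton_pow, Ideal.mem_span_singleton]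
  exact ⟨v, by rw [hu, hv, pow_succ]; ring⟩

lemma lem_local {A : Type*} [CommRing A] [IsLocalRing A] [IsNoetherianRing A]
    {t : A} (ht : t ∈ nonZeroDivisors A)
    (hm : IsLocalRing.maximalIdeal A = Ideal.span {t})
    {gg : A} (hgg : gg ≠ 0) (a : A) (n N : ℕ) (c : ℕ → A) (hcN : c N = 1)
    (hrel : ∑ i ∈ Finset.range (N + 1), c i * gg ^ (n * (N - i)) * a ^ i = 0) :
    ∃ b, a = gg ^ n * b := by
  by_cases ha : a = 0
  · exact ⟨0, by rw [ha, mul_zero]⟩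
  obtain ⟨i, u, hu, hau⟩ := rep_local hm ha
  obtain ⟨k, v, hv, hgv⟩ := rep_local hm hgg
  by_cases hik : n * k ≤ i
  · obtain ⟨d, hd⟩ : ∃ d, i = n * k + d := ⟨i - n * k, by omega⟩
    obtain ⟨v', hv'⟩ := hv
    refine ⟨((v'⁻¹ : Aˣ) : A) ^ n * (t ^ d * u), ?_⟩
    have hvv : (v : A) ^ n * ((v'⁻¹ : Aˣ) : A) ^ n = 1 := by
      rw [← hv', ← mul_pow, ← Units.val_mul, mul_inv_cancel, Units.val_one, one_pow]
    calc a = t ^ i * u := hau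
    _ = (t ^ (n * k) * t ^ d) * u := by rw [← pow_add, ← hd]
    _ = (t ^ (n * k) * ((v : A) ^ n * ((v'⁻¹ : Aˣ) : A) ^ n)) * (t ^ d * u) := by
        rw [hvv]; ring
    _ = (t ^ k * v) ^ n * (((v'⁻¹ : Aˣ) : A) ^ n * (t ^ d * u)) := by
        rw [mul_pow, ← pow_mul, mul_comm k n]; ring
    _ = gg ^ n * (((v'⁻¹ : Aˣ) : A) ^ n * (t ^ d * u)) := by rw [← hgv]
  · exfalso
    -- the sum of lower-order terms is divisible by t^(i*N+1)
    push_neg at hik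
    have hdvd : t ^ (i * N + 1) ∣
        ∑ i' ∈ Finset.range N, c i' * gg ^ (n * (N - i')) * a ^ i' := by
      apply Finset.dvd_sum
      intro i' hi'
      rw [Finset.mem_range] at hi'
      have he : i * N + 1 ≤ k * (n * (N - i')) + i * i' := by
        obtain ⟨d, hd, hd1⟩ : ∃ d, N = i' + d ∧ 1 ≤ d := ⟨N - i', by omega, by omega⟩
        subst hd
        have h1 : (i + 1) * d ≤ (n * k) * d := Nat.mul_le_mul_right d (by omega)
        have h2 : i' + d - i' = d := by omega
        rw [h2]
        nlinarith [h1, hd1]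
      have h2 : gg ^ (n * (N - i')) * a ^ i' =
          t ^ (k * (n * (N - i')) + i * i') * ((v ^ (n * (N - i'))) * u ^ i') := by
        rw [hgv, hau, mul_pow, mul_pow, ← pow_mul, ← pow_mul, pow_add]; ring
      rw [mul_assoc, h2]
      exact Dvd.dvd.mul_left (Dvd.dvd.mul_right (pow_dvd_pow t he) _) (c i')
    obtain ⟨w, hw⟩ := hdvd
    rw [Finset.sum_range_succ, hcN, Nat.sub_self, mul_zero, pow_zero, one_mul, one_mul, hw]
      at hrel
    have hrel2 : t ^ (i * N) * (u ^ N + t * w) = 0 := by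
      rw [hau] at hrel
      calc t ^ (i * N) * (u ^ N + t * w) = (t ^ i * u) ^ N + t ^ (i * N + 1) * w := by
            rw [mul_pow, ← pow_mul]; ring
      _ = 0 := by linear_combination hrel
    have h3 : u ^ N + t * w = 0 := by
      have := pow_mem ht (i * N)
      exact mem_nonZeroDivisors_iff_right.mp this _ (by rw [mul_comm]; exact hrel2)
    have h4 : u ^ N ∈ IsLocalRing.maximalIdeal A := by
      rw [hm, Ideal.mem_span_singleton]
      exact ⟨-w, by linear_combination h3⟩
    exact (IsLocalRing.maximalIdeal.isMaximal A).ne_top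
      (Ideal.eq_top_of_isUnit_mem _ h4 (hu.pow N))

lemma smul_mk_eq {R : Type*} [CommRing R] (I : Ideal R) (u b : R) :
    u • Ideal.Quotient.mk I b = Ideal.Quotient.mk I (u * b) := by
  rw [Algebra.smul_def, Ideal.Quotient.algebraMap_eq, ← _root_.map_mul]

lemma ann_mk_mem {R : Type*} [CommRing R] {I : Ideal R} {a : R} (r : R) :
    r ∈ (Submodule.span R {Ideal.Quotient.mk I a}).annihilator ↔ r * a ∈ I := by
  rw [Submodule.mem_annihilator_span_singleton, smul_mk_eq, Ideal.Quotient.eq_zero_iff_mem]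

lemma cancel_pow {R : Type*} [CommRing R] {g : R} (hg : g ∈ nonZeroDivisors R) (m : ℕ) (X : R) :
    g ^ m * X ∈ Ideal.span ({g ^ (m + 1)} : Set R) ↔ X ∈ Ideal.span ({g} : Set R) := by
  rw [Ideal.mem_span_singleton, Ideal.mem_span_singleton]
  constructor
  · rintro ⟨e, he⟩
    refine ⟨e, ?_⟩
    have h0 : (X - g * e) * g ^ m = 0 := by
      rw [pow_succ] at he
      linear_combination he
    have := mem_nonZeroDivisors_iff_right.mp (pow_mem hg m) _ h0
    linear_combination this
  · rintro ⟨e, rfl⟩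
    exact ⟨e, by rw [pow_succ]; ring⟩

lemma colon_bot_eq_ann {R M : Type*} [CommRing R] [AddCommGroup M] [Module R M] (y : M) :
    (⊥ : Submodule R M).colon {y} = (Submodule.span R {y}).annihilator := by
  ext r
  rw [Submodule.mem_colon_singleton, Submodule.mem_bot, Submodule.mem_annihilator_span_singleton]

lemma assoc_iff {R M : Type*} [CommRing R] [IsNoetherianRing R] [AddCommGroup M] [Module R M]
    {P : Ideal R} :
    P ∈ associatedPrimes R M ↔ P.IsPrime ∧ ∃ y : M, P = (Submodule.span R {y}).annihilator := by
  rw [AssociatedPrimes.mem_iff, isAssociatedPrime_iff]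
  simp only [colon_bot_eq_ann]

lemma ass_pow {R : Type*} [CommRing R] [IsNoetherianRing R] {g : R} (hg : g ∈ nonZeroDivisors R) (n : ℕ) :
    associatedPrimes R (R ⧸ Ideal.span ({g ^ (n + 1)} : Set R)) ⊆
      associatedPrimes R (R ⧸ Ideal.span ({g} : Set R)) := by
  induction n with
  | zero => rw [pow_one]
  | succ n IH =>
    intro P hP
    obtain ⟨hPprime, y, hy⟩ := assoc_iff.mp hP
    obtain ⟨a, rfl⟩ := Ideal.Quotient.mk_surjective y
    have hmem : ∀ r : R, r ∈ P ↔ r * a ∈ Ideal.span ({g ^ (n + 2)} : Set R) := by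
      intro r; rw [hy, ann_mk_mem]
    by_cases hcase : ∃ c : R,
        c * a ∈ Ideal.span ({g ^ (n + 1)} : Set R) ∧ c * a ∉ Ideal.span ({g ^ (n + 2)} : Set R)
    · obtain ⟨c, hc1, hc2⟩ := hcase
      obtain ⟨b, hb⟩ := Ideal.mem_span_singleton.mp hc1
      have hcP : c ∉ P := fun h => hc2 ((hmem c).mp h)
      refine assoc_iff.mpr ⟨hPprime, Ideal.Quotient.mk _ b, ?_⟩
      apply Ideal.ext
      intro r
      rw [ann_mk_mem, ← cancel_pow hg (n + 1) (r * b)]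
      have heq : g ^ (n + 1) * (r * b) = (r * c) * a := by linear_combination (-r) * hb
      rw [heq, ← hmem (r * c)]
      constructor
      · intro h
        exact P.mul_mem_right c h
      · intro h
        exact (hPprime.mem_or_mem h).resolve_right hcP
    · push_neg at hcase
      apply IH
      refine assoc_iff.mpr ⟨hPprime, Ideal.Quotient.mk _ a, ?_⟩
      apply Ideal.ext
      intro r
      rw [ann_mk_mem, hmem]
      constructor
      · intro h
        rw [Ideal.mem_span_singleton] at h ⊢
        exact dvd_trans (pow_dvd_pow g (by omega)) h
      · intro h
        exact hcase r h

lemma mem_ass_of_minimal {R : Type*} [CommRing R] [IsNoetherianRing R] {I p : Ideal R}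
    (hp : p ∈ I.minimalPrimes) : p ∈ associatedPrimes R (R ⧸ I) := by
  classical
  haveI hprime : p.IsPrime := hp.1.1
  have hIp : I ≤ p := hp.1.2
  have smul_mk : ∀ (u b : R), u • Ideal.Quotient.mk I b = Ideal.Quotient.mk I (u * b) := by
    intro u b
    rw [Algebra.smul_def, Ideal.Quotient.algebraMap_eq, ← _root_.map_mul]
  set B := Localization.AtPrime p with hB
  set κ : R →+* B := algebraMap R B with hκ
  have hrad : ∀ r ∈ p, ∃ (k : ℕ) (u : R), u ∉ p ∧ u * r ^ k ∈ I := by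
    intro r hr
    have hmrad : IsLocalRing.maximalIdeal B ≤ (I.map κ).radical := by
      rw [Ideal.radical_eq_sInf]
      refine le_sInf ?_
      rintro Q ⟨hQle, hQprime⟩
      have hcomap : I ≤ Q.comap κ := le_trans Ideal.le_comap_map (Ideal.comap_mono hQle)
      haveI := hQprime
      have hcp : Q.comap κ ≤ p := by
        intro a haQ
        by_contra hap
        exact hQprime.ne_top (Ideal.eq_top_of_isUnit_mem _ haQ
          (IsLocalization.map_units B (⟨a, hap⟩ : p.primeCompl)))
      have hpc : p = Q.comap κ :=
        le_antisymm (hp.2 ⟨Ideal.IsPrime.comap κ, hcomap⟩ hcp) hcp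
      calc IsLocalRing.maximalIdeal B = p.map κ :=
            (Localization.AtPrime.map_eq_maximalIdeal).symm
      _ = (Q.comap κ).map κ := by rw [← hpc]
      _ ≤ Q := Ideal.map_comap_le
    have hkr : κ r ∈ (I.map κ).radical := hmrad (by
      rw [← Localization.AtPrime.map_eq_maximalIdeal]
      exact Ideal.mem_map_of_mem κ hr)
    obtain ⟨k, hk⟩ := hkr
    rw [← map_pow] at hk
    obtain ⟨⟨⟨a, haI⟩, s⟩, has⟩ := (IsLocalization.mem_map_algebraMap_iff p.primeCompl B).mp hk
    simp only at has
    rw [← _root_.map_mul] at has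
    obtain ⟨u, hu⟩ := (IsLocalization.eq_iff_exists p.primeCompl B).mp has
    refine ⟨k, (u : R) * s, fun hmem => ?_, ?_⟩
    · rcases hprime.mem_or_mem hmem with h | h
      exacts [u.2 h, s.2 h]
    · have h5 : (u : R) * s * r ^ k = (u : R) * a := by linear_combination hu
      rw [h5]
      exact I.mul_mem_left _ haI
  let W : Submodule R (R ⧸ I) :=
    { carrier := {y | ∃ u, u ∉ p ∧ u • y = 0}
      add_mem' := by
        rintro y z ⟨u, hu, huy⟩ ⟨v, hv, hvz⟩
        refine ⟨u * v, fun h => (hprime.mem_or_mem h).elim hu hv, ?_⟩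
        have h1 : (u * v) • y = 0 := by rw [mul_comm, mul_smul, huy, smul_zero]
        have h2 : (u * v) • z = 0 := by rw [mul_smul, hvz, smul_zero]
        rw [smul_add, h1, h2, add_zero]
      zero_mem' := ⟨1, (Ideal.ne_top_iff_one p).mp hprime.ne_top, smul_zero 1⟩
      smul_mem' := by
        rintro c y ⟨u, hu, huy⟩
        exact ⟨u, hu, by rw [smul_comm, huy, smul_zero]⟩ }
  have hWmem : ∀ y : R ⧸ I, y ∈ W ↔ ∃ u, u ∉ p ∧ u • y = 0 := fun y => Iff.rfl
  have h1W : (Ideal.Quotient.mk I 1) ∉ W := by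
    rintro ⟨u, hu, huy⟩
    rw [smul_mk, mul_one, Ideal.Quotient.eq_zero_iff_mem] at huy
    exact hu (hIp huy)
  obtain ⟨J, ⟨y, hyW, hJy⟩, hmax⟩ :=
    set_has_maximal_iff_noetherian.mpr (inferInstance : IsNoetherianRing R)
      {J : Ideal R | ∃ y : R ⧸ I, y ∉ W ∧ J = (Submodule.span R {y}).annihilator}
      ⟨(Submodule.span R {Ideal.Quotient.mk I 1}).annihilator,
        Ideal.Quotient.mk I 1, h1W, rfl⟩
  subst hJy
  have le1 : (Submodule.span R {y}).annihilator ≤ p := by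
    intro c hc
    by_contra hcp
    exact hyW ⟨c, hcp, (Submodule.mem_annihilator_span_singleton _ _).mp hc⟩
  have le2 : p ≤ (Submodule.span R {y}).annihilator := by
    intro r hr
    obtain ⟨k, u, hu, huk⟩ := hrad r hr
    obtain ⟨b, rfl⟩ := Ideal.Quotient.mk_surjective y
    have hky : ∃ k', r ^ k' • (Ideal.Quotient.mk I b) ∈ W := by
      refine ⟨k, u, hu, ?_⟩
      rw [smul_mk, smul_mk, ← mul_assoc, Ideal.Quotient.eq_zero_iff_mem]
      exact I.mul_mem_right b huk
    have hk0 := Nat.find_spec hky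
    have hk0ne : Nat.find hky ≠ 0 := by
      intro h
      rw [h, pow_zero, one_smul] at hk0
      exact hyW hk0
    set z : R ⧸ I := r ^ (Nat.find hky - 1) • (Ideal.Quotient.mk I b) with hz
    have hzW : z ∉ W := Nat.find_min hky (by omega)
    have hrz : r • z ∈ W := by
      have : r • z = r ^ (Nat.find hky) • (Ideal.Quotient.mk I b) := by
        rw [hz, ← mul_smul, ← pow_succ']
        congr 2
        omega
      rw [this]
      exact hk0
    obtain ⟨u', hu', hu'rz⟩ := hrz
    have hz'W : u' • z ∉ W := by
      rintro ⟨v, hv, hvz⟩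
      exact hzW ⟨v * u', fun h => (hprime.mem_or_mem h).elim hv hu',
        by rw [mul_smul, hvz]⟩
    have chain : (Submodule.span R {Ideal.Quotient.mk I b}).annihilator ≤
        (Submodule.span R {u' • z}).annihilator := by
      intro cc hcc
      rw [Submodule.mem_annihilator_span_singleton] at hcc ⊢
      have h6 : cc • (u' • z) = (u' * r ^ (Nat.find hky - 1)) • (cc • Ideal.Quotient.mk I b) := by
        rw [hz, smul_smul, smul_smul, smul_smul]
        congr 1
        ring
      rw [h6, hcc, smul_zero]
    have heq : (Submodule.span R {Ideal.Quotient.mk I b}).annihilator =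
        (Submodule.span R {u' • z}).annihilator := by
      rcases chain.lt_or_eq with h | h
      · exact absurd h (hmax _ ⟨u' • z, hz'W, rfl⟩)
      · exact h
    rw [heq, Submodule.mem_annihilator_span_singleton, smul_comm]
    rw [hu'rz]
  exact assoc_iff.mpr ⟨hprime, y, le_antisymm le2 le1⟩

def multAlg {R A : Type*} [CommRing R] [CommRing A] [Algebra R A] (N : Submodule R A) :
    Subalgebra R A :=
  { carrier := {u : A | ∀ m ∈ N, u * m ∈ N}
    mul_mem' := fun {u v} hu hv m hm => by rw [mul_assoc]; exact hu _ (hv _ hm)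
    one_mem' := fun m hm => by rw [one_mul]; exact hm
    add_mem' := fun {u v} hu hv m hm => by rw [add_mul]; exact N.add_mem (hu _ hm) (hv _ hm)
    algebraMap_mem' := fun r m hm => by rw [← Algebra.smul_def]; exact N.smul_mem r hm }

lemma mem_multAlg {R A : Type*} [CommRing R] [CommRing A] [Algebra R A] (N : Submodule R A)
    (u : A) : u ∈ multAlg N ↔ ∀ m ∈ N, u * m ∈ N := Iff.rfl

lemma finite_of_algebra_eq {R S : Type*} [CommRing R] [CommRing S] (A1 A2 : Algebra R S)
    (h : A1 = A2) (hf : @Module.Finite R S _ _ (@Algebra.toModule R S _ _ A1)) :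
    @Module.Finite R S _ _ (@Algebra.toModule R S _ _ A2) := h ▸ hf

lemma key_forward_aux {R : Type} [CommRing R] [IsNoetherianRing R] {g : R}
    (hg : g ∈ nonZeroDivisors R) (hNP : IsNormalPair R (Ideal.span {g}))
    {q : Ideal R} (hq : q ∈ associatedPrimes R (R ⧸ Ideal.span ({g} : Set R)))
    (A : Type) [CommRing A] [Algebra R A] [IsLocalization (Submonoid.powers g) A] :
    ∃ r w : R, r ∈ q ∧ w ∉ q ∧ ∀ z ∈ q, ∃ c, z * w = r * c := by
  obtain ⟨hqprime, y, hy⟩ := assoc_iff.mp hq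
  obtain ⟨x, rfl⟩ := Ideal.Quotient.mk_surjective y
  have hmem : ∀ r : R, r ∈ q ↔ r * x ∈ Ideal.span ({g} : Set R) := by
    intro r; rw [hy, ann_mk_mem]
  set ι : R →+* A := algebraMap R A with hι
  have hpow : (Submonoid.powers g : Submonoid R) ≤ nonZeroDivisors R := by
    rintro m ⟨k, rfl⟩; exact pow_mem hg k
  have hinj : Function.Injective ι := IsLocalization.injective (M := Submonoid.powers g) A hpow
  have hgu : IsUnit (ι g) :=
    IsLocalization.map_units A (⟨g, Submonoid.mem_powers g⟩ : Submonoid.powers g)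
  set t : A := IsLocalization.mk' A x (⟨g, Submonoid.mem_powers g⟩ : Submonoid.powers g) with hT
  have htg : t * ι g = ι x := IsLocalization.mk'_spec A x _
  set N : Submodule R A := Submodule.map (Algebra.linearMap R A) (q : Submodule R R) with hN
  have hmemN : ∀ u : A, u ∈ N ↔ ∃ z ∈ q, ι z = u := by
    intro u
    constructor
    · rintro ⟨z, hz, rfl⟩; exact ⟨z, hz, rfl⟩
    · rintro ⟨z, hz, rfl⟩; exact ⟨z, hz, rfl⟩
  have hgq : g ∈ q := (hmem g).mpr (Ideal.mul_mem_right x _ (Ideal.mem_span_singleton_self g))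
  have hgN : ι g ∈ N := (hmemN _).mpr ⟨g, hgq, rfl⟩
  by_cases hcase : ∀ z ∈ q, t * ι z ∈ N
  · exfalso
    set S' : Subalgebra R A := multAlg N with hS'
    have htS : t ∈ S' := by
      rw [hS', mem_multAlg]
      intro m hm
      obtain ⟨z, hz, rfl⟩ := hm
      exact hcase z hz
    haveI hNfg : IsNoetherian R N :=
      isNoetherian_of_fg_of_noetherian _ (Submodule.FG.map _ (IsNoetherian.noetherian _))
    let ψ : S' →ₗ[R] N :=
      { toFun := fun u => ⟨(u : A) * ι g, u.2 _ hgN⟩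
        map_add' := fun u v => by ext; simp [add_mul]
        map_smul' := fun r u => by ext; simp [Algebra.smul_def]; ring }
    have hψinj : Function.Injective ψ := by
      intro u v huv
      have h1 : (u : A) * ι g = (v : A) * ι g := congrArg Subtype.val huv
      have h2 : (u : A) = (v : A) := by
        obtain ⟨gu, hgu'⟩ := hgu
        calc (u : A) = (u : A) * ι g * (gu⁻¹ : Aˣ) := by
              rw [← hgu', Units.mul_inv_cancel_right]
        _ = (v : A) * ι g * (gu⁻¹ : Aˣ) := by rw [h1]
        _ = (v : A) := by rw [← hgu', Units.mul_inv_cancel_right]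
      exact Subtype.ext h2
    haveI : IsNoetherian R S' := isNoetherian_of_injective ψ hψinj
    haveI hfinS : Module.Finite R S' := ⟨IsNoetherian.noetherian ⊤⟩
    set φ : R →+* S' := algebraMap R S' with hφ
    have hφval : ∀ r : R, ((φ r : S') : A) = ι r := fun r => rfl
    have hφinj : Function.Injective φ := by
      intro a b hab
      exact hinj (by rw [← hφval a, ← hφval b, hab])
    have halg : (inferInstance : Algebra R S') = φ.toAlgebra :=
      Algebra.algebra_ext _ _ fun r => rfl
    have hcond : ∃ n : ℕ,
        (∀ x' ∈ RingHom.ker φ, ∀ y' ∈ (Ideal.span ({g} : Set R)) ^ n, y' * x' = 0) ∧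
        (∀ s : S', ∀ y' ∈ (Ideal.span ({g} : Set R)) ^ n, φ y' * s ∈ φ.range) := by
      refine ⟨1, ?_, ?_⟩
      · intro x' hx' y' _
        have h0 : φ x' = 0 := hx'
        have : x' = 0 := hφinj (by rw [h0, map_zero])
        rw [this, mul_zero]
      · intro s y' hy'
        rw [pow_one] at hy'
        obtain ⟨d, hd⟩ := Ideal.mem_span_singleton.mp hy'
        obtain ⟨z, hz, hez⟩ := (hmemN _).mp (s.2 _ hgN)
        refine ⟨d * z, ?_⟩
        apply Subtype.ext
        show ι (d * z) = ((φ y' * s : S') : A)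
        have : ((φ y' * s : S') : A) = ι y' * (s : A) := rfl
        rw [this, hd, _root_.map_mul, _root_.map_mul, hez]
        ring
    have hass' : ∀ q' ∈ associatedPrimes S' S', ¬ Ideal.map φ (Ideal.span ({g} : Set R)) ≤ q' := by
      intro q' hq' hle
      obtain ⟨hq'p, z, hz⟩ := hq'
      have hgq' : φ g ∈ q' := hle (Ideal.mem_map_of_mem φ (Ideal.mem_span_singleton_self g))
      rw [hz] at hgq'
      obtain ⟨k, hk⟩ := hgq'
      rw [Submodule.mem_colon_singleton, Submodule.mem_bot] at hk
      have h1 : φ g ^ k * z = 0 := by rw [← smul_eq_mul]; exact hk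
      have h2 : ι g ^ k * (z : A) = 0 := by
        have h3 := congrArg (Subtype.val) h1
        rw [← hφval g]
        simpa using h3
      have hz0 : z = 0 := Subtype.ext (by simpa using ((hgu.pow k).mul_right_eq_zero).mp h2)
      rw [hz0] at hz
      apply hq'p.ne_top
      rw [hz, Ideal.radical_eq_top, Submodule.eq_top_iff']
      intro r
      rw [Submodule.mem_colon_singleton, smul_zero]
      exact Submodule.zero_mem _
    have hbij : Function.Bijective φ := by
      refine hNP S' inferInstance φ ?_ hcond hass'
      exact finite_of_algebra_eq _ _ halg hfinS
    obtain ⟨b, hb⟩ := hbij.2 ⟨t, htS⟩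
    have hval : ι b = t := by
      rw [← hφval b, hb]
    have h16 : g * b = x := by
      apply hinj
      rw [_root_.map_mul, hval, mul_comm, htg]
    exact hqprime.ne_top ((Ideal.eq_top_iff_one q).mpr ((hmem 1).mpr
      (by rw [one_mul, ← h16]; exact Ideal.mul_mem_right b _ (Ideal.mem_span_singleton_self g))))
  · push_neg at hcase
    obtain ⟨z, hzq, hznotN⟩ := hcase
    obtain ⟨m, hm⟩ := Ideal.mem_span_singleton.mp ((hmem z).mp hzq)
    have htz : t * ι z = ι m := by
      apply hgu.mul_left_cancel
      calc ι g * (t * ι z) = (t * ι g) * ι z := by ring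
      _ = ι x * ι z := by rw [htg]
      _ = ι (x * z) := by rw [_root_.map_mul]
      _ = ι (g * m) := by rw [show x * z = g * m from by linear_combination hm]
      _ = ι g * ι m := by rw [_root_.map_mul]
    have hmq : m ∉ q := fun h => hznotN (by rw [htz]; exact (hmemN _).mpr ⟨m, h, rfl⟩)
    refine ⟨z, m, hzq, hmq, ?_⟩
    intro z' hz'
    obtain ⟨c, hc⟩ := Ideal.mem_span_singleton.mp ((hmem z').mp hz')
    refine ⟨c, ?_⟩
    have h0 : (z' * m - z * c) * g = 0 := by linear_combination z * hc - z' * hm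
    have := mem_nonZeroDivisors_iff_right.mp hg _ h0
    linear_combination this

lemma key_forward {R : Type} [CommRing R] [IsNoetherianRing R] {g : R}
    (hg : g ∈ nonZeroDivisors R) (hNP : IsNormalPair R (Ideal.span {g}))
    {q : Ideal R} (hq : q ∈ associatedPrimes R (R ⧸ Ideal.span ({g} : Set R))) :
    ∃ r w : R, r ∈ q ∧ w ∉ q ∧ ∀ z ∈ q, ∃ c, z * w = r * c :=
  key_forward_aux hg hNP hq (Localization.Away g)

lemma max_eq_span {R : Type*} [CommRing R] {q : Ideal R} [q.IsPrime] {r w : R}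
    (hr : r ∈ q) (hw : w ∉ q) (hmul : ∀ z ∈ q, ∃ c, z * w = r * c) :
    IsLocalRing.maximalIdeal (Localization.AtPrime q) =
      Ideal.span {algebraMap R (Localization.AtPrime q) r} := by
  apply le_antisymm
  · rw [← Localization.AtPrime.map_eq_maximalIdeal, Ideal.map_le_iff_le_comap]
    intro z hz
    rw [Ideal.mem_comap, Ideal.mem_span_singleton]
    obtain ⟨c, hc⟩ := hmul z hz
    obtain ⟨wu, hwu'⟩ : IsUnit (algebraMap R (Localization.AtPrime q) w) :=
      IsLocalization.map_units _ (⟨w, hw⟩ : q.primeCompl)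
    refine ⟨algebraMap R _ c * ↑wu⁻¹, ?_⟩
    have h1 : algebraMap R (Localization.AtPrime q) z * algebraMap R _ w
        = algebraMap R _ r * algebraMap R _ c := by
      rw [← _root_.map_mul, ← _root_.map_mul, hc]
    calc algebraMap R (Localization.AtPrime q) z
        = algebraMap R _ z * ↑wu * ↑wu⁻¹ := by rw [Units.mul_inv_cancel_right]
    _ = algebraMap R _ r * (algebraMap R _ c * ↑wu⁻¹) := by rw [hwu', h1]; ring
  · rw [Ideal.span_le, Set.singleton_subset_iff, ← Localization.AtPrime.map_eq_maximalIdeal]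
    exact Ideal.mem_map_of_mem _ hr

lemma claim1 {R : Type} [CommRing R] [IsNoetherianRing R] {g : R}
    (hg : g ∈ nonZeroDivisors R) (hNP : IsNormalPair R (Ideal.span {g}))
    {q : Ideal R} (hq : q ∈ associatedPrimes R (R ⧸ Ideal.span ({g} : Set R))) :
    q ∈ (Ideal.span ({g} : Set R)).minimalPrimes := by
  haveI hqp : q.IsPrime := hq.isPrime
  have hIq : Ideal.span ({g} : Set R) ≤ q := by
    obtain ⟨_, y, hy⟩ := assoc_iff.mp hq
    obtain ⟨x, rfl⟩ := Ideal.Quotient.mk_surjective y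
    intro i hi
    rw [hy, ann_mk_mem]
    exact Ideal.mul_mem_right x _ hi
  obtain ⟨r, w, hr, hw, hmul⟩ := key_forward hg hNP hq
  obtain ⟨p, hpmin, hpq⟩ := Ideal.exists_minimalPrimes_le hIq
  haveI hpp : p.IsPrime := hpmin.1.1
  have hpeq : p = q := by
    by_contra hne
    have hmB := max_eq_span hr hw hmul
    haveI : IsNoetherianRing (Localization.AtPrime q) :=
      IsLocalization.isNoetherianRing q.primeCompl _ inferInstance
    by_cases hrp : r ∈ p
    · have h1 : Ideal.map (algebraMap R (Localization.AtPrime q)) p =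
          IsLocalRing.maximalIdeal (Localization.AtPrime q) := by
        apply le_antisymm
        · rw [← Localization.AtPrime.map_eq_maximalIdeal]
          exact Ideal.map_mono hpq
        · rw [hmB, Ideal.span_le, Set.singleton_subset_iff]
          exact Ideal.mem_map_of_mem _ hrp
      have hd : Disjoint ((q.primeCompl : Submonoid R) : Set R) (p : Set R) := by
        rw [Set.disjoint_left]
        intro a ha hap
        exact ha (hpq hap)
      have h2 := IsLocalization.under_map_of_isPrime_disjoint q.primeCompl
        (Localization.AtPrime q) hpp hd
      rw [h1, Localization.AtPrime.comap_maximalIdeal] at h2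
      exact hne h2.symm
    · have hdvd : ∀ (k : ℕ), ∀ z ∈ p, (algebraMap R (Localization.AtPrime q) r) ^ k ∣
          algebraMap R (Localization.AtPrime q) z := by
        intro k
        induction k with
        | zero => intro z _; simpa using one_dvd _
        | succ k IH =>
          intro z hz
          obtain ⟨c, hc⟩ := hmul z (hpq hz)
          have hcp : c ∈ p := by
            have hrc : r * c ∈ p := by rw [← hc]; exact p.mul_mem_right w hz
            exact (hpp.mem_or_mem hrc).resolve_left hrp
          obtain ⟨e, he⟩ := IH c hcp
          obtain ⟨wu, hwu'⟩ : IsUnit (algebraMap R (Localization.AtPrime q) w) :=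
            IsLocalization.map_units _ (⟨w, hw⟩ : q.primeCompl)
          refine ⟨e * ↑wu⁻¹, ?_⟩
          have h1 : algebraMap R (Localization.AtPrime q) z * algebraMap R _ w
              = algebraMap R _ r * algebraMap R _ c := by
            rw [← _root_.map_mul, ← _root_.map_mul, hc]
          calc algebraMap R (Localization.AtPrime q) z
              = algebraMap R _ z * ↑wu * ↑wu⁻¹ := by rw [Units.mul_inv_cancel_right]
          _ = algebraMap R _ r ^ (k + 1) * (e * ↑wu⁻¹) := by
              rw [hwu', h1, he]; ring
      have hg0 : algebraMap R (Localization.AtPrime q) g = 0 := by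
        have hgp : g ∈ p := hpmin.1.2 (Ideal.mem_span_singleton_self g)
        have hmem : ∀ k : ℕ, algebraMap R (Localization.AtPrime q) g ∈
            (IsLocalRing.maximalIdeal (Localization.AtPrime q)) ^ k := by
          intro k
          rw [hmB, Ideal.span_singleton_pow, Ideal.mem_span_singleton]
          exact hdvd k g hgp
        have hbot : (⨅ k : ℕ, (IsLocalRing.maximalIdeal (Localization.AtPrime q)) ^ k) = ⊥ :=
          Ideal.iInf_pow_eq_bot_of_isLocalRing _ (IsLocalRing.maximalIdeal.isMaximal _).ne_top
        have hf : algebraMap R (Localization.AtPrime q) g ∈ (⊥ : Ideal (Localization.AtPrime q))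
          := by rw [← hbot]; exact Submodule.mem_iInf _ |>.mpr hmem
        simpa using hf
      have hnzd := nzd_localization q.primeCompl (Localization.AtPrime q) hg
      have h1 : (1 : Localization.AtPrime q) = 0 := mem_nonZeroDivisors_iff_right.mp hnzd 1 (by rw [hg0, mul_zero])
      exact one_ne_zero h1
  rw [← hpeq]
  exact hpmin

lemma claim2 {R : Type} [CommRing R] [IsNoetherianRing R] {g : R}
    (hg : g ∈ nonZeroDivisors R) (hNP : IsNormalPair R (Ideal.span {g}))
    {p : Ideal R} (hp : p ∈ (Ideal.span ({g} : Set R)).minimalPrimes) [p.IsPrime] :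
    ∃ t : Localization.AtPrime p, t ∈ nonZeroDivisors (Localization.AtPrime p) ∧
      IsLocalRing.maximalIdeal (Localization.AtPrime p) = Ideal.span {t} := by
  obtain ⟨r, w, hr, hw, hmul⟩ := key_forward hg hNP (mem_ass_of_minimal hp)
  refine ⟨algebraMap R _ r, ?_, max_eq_span hr hw hmul⟩
  rw [mem_nonZeroDivisors_iff_right]
  intro d hd
  obtain ⟨c, hc⟩ := hmul g (hp.1.2 (Ideal.mem_span_singleton_self g))
  have hwu : IsUnit (algebraMap R (Localization.AtPrime p) w) :=
    IsLocalization.map_units _ (⟨w, hw⟩ : p.primeCompl)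
  have hgnzd := nzd_localization p.primeCompl (Localization.AtPrime p) hg
  have h1 : d * algebraMap R (Localization.AtPrime p) g
      * algebraMap R (Localization.AtPrime p) w = 0 := by
    rw [mul_assoc, ← _root_.map_mul, hc, _root_.map_mul, ← mul_assoc, hd, zero_mul]
  exact mem_nonZeroDivisors_iff_right.mp hgnzd d ((hwu.mul_left_eq_zero).mp h1)

lemma backward {R : Type} [CommRing R] [IsNoetherianRing R] {g : R}
    (hg : g ∈ nonZeroDivisors R)
    (hreg : ∀ p : Ideal R, ∀ hp : p ∈ (Ideal.span ({g} : Set R)).minimalPrimes,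
          haveI : p.IsPrime := hp.1.1
          ∃ t : Localization.AtPrime p, t ∈ nonZeroDivisors (Localization.AtPrime p) ∧
            IsLocalRing.maximalIdeal (Localization.AtPrime p) = Ideal.span {t})
    (hass : ∀ q ∈ associatedPrimes R (R ⧸ Ideal.span ({g} : Set R)),
          q ∈ (Ideal.span ({g} : Set R)).minimalPrimes) :
    IsNormalPair R (Ideal.span {g}) := by
  intro S iS φ hfin hmod hassS
  letI := iS
  letI := φ.toAlgebra
  haveI hfin2 : Module.Finite R S := hfin
  obtain ⟨n, hker, hrange⟩ := hmod
  have hgn : g ^ n ∈ (Ideal.span ({g} : Set R)) ^ n := by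
    rw [Ideal.span_singleton_pow]; exact Ideal.mem_span_singleton_self _
  have hinj : Function.Injective φ := by
    rw [injective_iff_map_eq_zero]
    intro a ha
    have h1 : g ^ n * a = 0 := hker a ha (g ^ n) hgn
    exact mem_nonZeroDivisors_iff_right.mp (pow_mem hg n) a (by rw [mul_comm]; exact h1)
  refine ⟨hinj, ?_⟩
  intro s
  haveI : IsNoetherian R S := isNoetherian_of_isNoetherianRing_of_finite R S
  haveI : IsNoetherianRing S := isNoetherianRing_iff.mpr
    (isNoetherian_of_tower R (inferInstance : IsNoetherian R S))
  have hgSnzd : φ g ∈ nonZeroDivisors S := by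
    rw [mem_nonZeroDivisors_iff_right]
    intro z hz
    by_contra hz0
    obtain ⟨Q, hQ, hannQ⟩ := exists_le_isAssociatedPrime_of_isNoetherianRing S z hz0
    rw [colon_bot_eq_ann] at hannQ
    refine hassS Q hQ ?_
    rw [Ideal.map_span, Set.image_singleton, Ideal.span_le, Set.singleton_subset_iff]
    exact hannQ ((Submodule.mem_annihilator_span_singleton z (φ g)).mpr
      (by rw [smul_eq_mul, mul_comm]; exact hz))
  obtain ⟨a, ha⟩ := hrange s (g ^ n) hgn
  obtain ⟨f, hfmonic, hfeval⟩ := (Algebra.IsIntegral.of_finite R S).isIntegral s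
  rw [RingHom.algebraMap_toAlgebra, Polynomial.eval₂_eq_sum_range] at hfeval
  set N := f.natDegree with hN
  set c : ℕ → R := f.coeff with hc
  have hE : (∑ i ∈ Finset.range (N + 1), c i * g ^ (n * (N - i)) * a ^ i) = 0 := by
    apply hinj
    rw [map_zero, map_sum]
    have hterm : ∀ i ∈ Finset.range (N + 1), φ (c i * g ^ (n * (N - i)) * a ^ i)
        = φ g ^ (n * N) * (φ (c i) * s ^ i) := by
      intro i hi
      rw [Finset.mem_range] at hi
      have hNi : n * (N - i) + n * i = n * N := by
        rw [← Nat.mul_add]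
        congr 1
        omega
      rw [_root_.map_mul, _root_.map_mul, map_pow φ a, ha, mul_pow, map_pow, map_pow, ← pow_mul]
      calc φ (c i) * φ g ^ (n * (N - i)) * (φ g ^ (n * i) * s ^ i)
          = φ g ^ (n * (N - i) + n * i) * (φ (c i) * s ^ i) := by rw [pow_add]; ring
      _ = φ g ^ (n * N) * (φ (c i) * s ^ i) := by rw [hNi]
    rw [Finset.sum_congr rfl hterm, ← Finset.mul_sum, hfeval, mul_zero]
  have haIn : a ∈ Ideal.span ({g ^ n} : Set R) := by
    by_contra hnot
    have hne : Ideal.Quotient.mk (Ideal.span ({g ^ n} : Set R)) a ≠ 0 := by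
      rw [Ne, Ideal.Quotient.eq_zero_iff_mem]; exact hnot
    obtain ⟨P, hP, hannP⟩ := exists_le_isAssociatedPrime_of_isNoetherianRing R _ hne
    rw [colon_bot_eq_ann] at hannP
    obtain ⟨n', rfl⟩ : ∃ n', n = n' + 1 := by
      cases n with
      | zero =>
        exfalso
        apply hnot
        rw [pow_zero, Ideal.span_singleton_one]
        exact Submodule.mem_top
      | succ m => exact ⟨m, rfl⟩
    have hPmin := hass P (ass_pow hg n' hP)
    haveI hPp : P.IsPrime := hPmin.1.1
    obtain ⟨t, htnzd, htm⟩ := hreg P hPmin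
    haveI : IsNoetherianRing (Localization.AtPrime P) :=
      IsLocalization.isNoetherianRing P.primeCompl _ inferInstance
    have hgP0 : algebraMap R (Localization.AtPrime P) g ≠ 0 := by
      intro h0
      have hn := nzd_localization P.primeCompl (Localization.AtPrime P) hg
      exact one_ne_zero (mem_nonZeroDivisors_iff_right.mp hn 1 (by rw [h0, mul_zero]))
    have hrelP : ∑ i ∈ Finset.range (N + 1),
        (algebraMap R (Localization.AtPrime P) (c i))
          * (algebraMap R (Localization.AtPrime P) g) ^ ((n' + 1) * (N - i))
          * (algebraMap R (Localization.AtPrime P) a) ^ i = 0 := by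
      have hmapE := congrArg (algebraMap R (Localization.AtPrime P)) hE
      rw [map_sum, map_zero] at hmapE
      simp only [_root_.map_mul, map_pow] at hmapE
      exact hmapE
    have hcN : algebraMap R (Localization.AtPrime P) (c N) = 1 := by
      rw [show c N = 1 from hfmonic.coeff_natDegree, map_one]
    obtain ⟨b, hb⟩ := lem_local htnzd htm hgP0 (algebraMap R (Localization.AtPrime P) a)
      (n' + 1) N (fun i => algebraMap R (Localization.AtPrime P) (c i)) hcN hrelP
    obtain ⟨⟨b', u'⟩, hbu⟩ := IsLocalization.surj P.primeCompl b
    simp only at hbu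
    have h7 : algebraMap R (Localization.AtPrime P) (a * u')
        = algebraMap R (Localization.AtPrime P) (g ^ (n' + 1) * b') := by
      rw [_root_.map_mul, _root_.map_mul, hb, map_pow, mul_assoc, hbu]
    obtain ⟨v, hv⟩ := (IsLocalization.eq_iff_exists P.primeCompl _).mp h7
    have hmem : ((v : R) * u') ∈ (Submodule.span R
        {Ideal.Quotient.mk (Ideal.span ({g ^ (n' + 1)} : Set R)) a}).annihilator := by
      rw [ann_mk_mem, Ideal.mem_span_singleton]
      exact ⟨v * b', by linear_combination hv⟩
    exact Submonoid.mul_mem _ v.2 u'.2 (hannP hmem)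
  obtain ⟨e, he⟩ := Ideal.mem_span_singleton.mp haIn
  refine ⟨e, ?_⟩
  have h8 : φ (g ^ n) * s = φ (g ^ n) * φ e := by
    rw [← ha, he, _root_.map_mul]
  have h9 : (s - φ e) * φ g ^ n = 0 := by
    rw [← map_pow]
    linear_combination h8
  have h10 := mem_nonZeroDivisors_iff_right.mp (pow_mem hgSnzd n) _ h9
  linear_combination -h10

end Helpers

/-- For an effective Cartier divisor D = (g = 0) on a Noetherian (affine)
scheme, the pair (D, X) is normal iff X is regular (a 1-dimensional regular local ring)
at all generic points of D and D has no embedded points. -/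
theorem stmt11 (R : Type) [CommRing R] [IsNoetherianRing R]
    (g : R) (hg : g ∈ nonZeroDivisors R) :
    IsNormalPair R (Ideal.span ({g} : Set R)) ↔
      ((∀ p : Ideal R, ∀ hp : p ∈ (Ideal.span ({g} : Set R)).minimalPrimes,
          haveI : p.IsPrime := hp.1.1
          ∃ t : Localization.AtPrime p, t ∈ nonZeroDivisors (Localization.AtPrime p) ∧
            IsLocalRing.maximalIdeal (Localization.AtPrime p) = Ideal.span {t}) ∧
        (∀ q ∈ associatedPrimes R (R ⧸ Ideal.span ({g} : Set R)),
          q ∈ (Ideal.span ({g} : Set R)).minimalPrimes)) := by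
  constructor
  · intro hNP
    refine ⟨?_, ?_⟩
    · intro p hp
      haveI : p.IsPrime := hp.1.1
      exact claim2 hg hNP hp
    · intro q hq
      exact claim1 hg hNP hq
  · rintro ⟨hreg, hass⟩
    exact backward hg hreg hass
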